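/- Groetsch's theorem for hyperbolic spaces: Let (X,ρ,W) be a uniformly convex hyperbolic space, C ⊆ X nonempty convex, T : C → C nonexpansive with at least one fixed point, and (λ_n) ⊆ [0,1] with ∑_{n=0}^∞ λ_n(1−λ_n) = ∞. Then for every x ∈ C, the Krasnoselski–Mann iteration (x_n) satisfies lim_{n→∞} ρ(x_n, T x_n) = 0. -/

import Mathlib

open Filter

section auxsec
variable {X : Type*} [MetricSpace X]

lemma myW0 (W : X → X → ℝ → X)
    (W1 : ∀ x y z : X, ∀ l : ℝ, l ∈ Set.Icc (0:ℝ) 1 →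
      dist z (W x y l) ≤ (1 - l) * dist z x + l * dist z y) (x y : X) :
    W x y 0 = x := by
  have h := W1 x y x 0 (by norm_num)
  simp only [sub_zero, one_mul, dist_self, zero_mul, add_zero, mul_zero, zero_add] at h
  exact (dist_le_zero.mp h).symm

lemma myW1 (W : X → X → ℝ → X)
    (W1 : ∀ x y z : X, ∀ l : ℝ, l ∈ Set.Icc (0:ℝ) 1 →
      dist z (W x y l) ≤ (1 - l) * dist z x + l * dist z y) (x y : X) :
    W x y 1 = y := by
  have h := W1 x y y 1 (by norm_num)
  simp only [sub_self, zero_mul, one_mul, dist_self, add_zero, zero_add, mul_zero] at h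
  exact (dist_le_zero.mp h).symm

lemma myDist0 (W : X → X → ℝ → X)
    (W1 : ∀ x y z : X, ∀ l : ℝ, l ∈ Set.Icc (0:ℝ) 1 →
      dist z (W x y l) ≤ (1 - l) * dist z x + l * dist z y)
    (W2 : ∀ x y : X, ∀ l l' : ℝ, l ∈ Set.Icc (0:ℝ) 1 → l' ∈ Set.Icc (0:ℝ) 1 →
      dist (W x y l) (W x y l') = |l - l'| * dist x y)
    (x y : X) (l : ℝ) (hl : l ∈ Set.Icc (0:ℝ) 1) :
    dist (W x y l) x = l * dist x y := by
  have h := W2 x y l 0 hl (by norm_num)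
  rw [myW0 W W1] at h
  rw [h, sub_zero, abs_of_nonneg hl.1]

lemma myDist1 (W : X → X → ℝ → X)
    (W1 : ∀ x y z : X, ∀ l : ℝ, l ∈ Set.Icc (0:ℝ) 1 →
      dist z (W x y l) ≤ (1 - l) * dist z x + l * dist z y)
    (W2 : ∀ x y : X, ∀ l l' : ℝ, l ∈ Set.Icc (0:ℝ) 1 → l' ∈ Set.Icc (0:ℝ) 1 →
      dist (W x y l) (W x y l') = |l - l'| * dist x y)
    (x y : X) (l : ℝ) (hl : l ∈ Set.Icc (0:ℝ) 1) :
    dist (W x y l) y = (1 - l) * dist x y := by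
  have h := W2 x y l 1 hl (by norm_num)
  rw [myW1 W W1] at h
  rw [h, abs_sub_comm, abs_of_nonneg (by linarith [hl.2] : (0:ℝ) ≤ 1 - l)]

lemma myUnique (W : X → X → ℝ → X) (η : ℝ → ℝ → ℝ)
    (hη : ∀ r ε : ℝ, 0 < r → ε ∈ Set.Ioc (0:ℝ) 2 → η r ε ∈ Set.Ioc (0:ℝ) 1)
    (hmod : ∀ r ε : ℝ, ∀ a u v : X, 0 < r → ε ∈ Set.Ioc (0:ℝ) 2 →
      dist u a ≤ r → dist v a ≤ r → ε * r ≤ dist u v →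
      dist (W u v (1/2)) a ≤ (1 - η r ε) * r)
    {x m p1 p2 : X} {α β : ℝ}
    (h1 : dist p1 x ≤ α) (h2 : dist p2 x ≤ α)
    (h3 : dist p1 m ≤ β) (h4 : dist p2 m ≤ β)
    (h5 : α + β ≤ dist x m) : p1 = p2 := by
  by_contra hne
  have hδ : 0 < dist p1 p2 := dist_pos.mpr hne
  have hupα : dist p1 p2 ≤ α + α := by
    calc dist p1 p2 ≤ dist p1 x + dist x p2 := dist_triangle _ _ _
      _ = dist p1 x + dist p2 x := by rw [dist_comm x p2]
      _ ≤ α + α := add_le_add h1 h2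
  have hupβ : dist p1 p2 ≤ β + β := by
    calc dist p1 p2 ≤ dist p1 m + dist m p2 := dist_triangle _ _ _
      _ = dist p1 m + dist p2 m := by rw [dist_comm m p2]
      _ ≤ β + β := add_le_add h3 h4
  have hα : 0 < α := by linarith
  have hβ : 0 < β := by linarith
  have hε1 : dist p1 p2 / α ∈ Set.Ioc (0:ℝ) 2 :=
    ⟨div_pos hδ hα, by rw [div_le_iff₀ hα]; linarith⟩
  have hε2 : dist p1 p2 / β ∈ Set.Ioc (0:ℝ) 2 :=
    ⟨div_pos hδ hβ, by rw [div_le_iff₀ hβ]; linarith⟩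
  have q1 := hmod α _ x p1 p2 hα hε1 h1 h2 (le_of_eq (div_mul_cancel₀ _ (ne_of_gt hα)))
  have q2 := hmod β _ m p1 p2 hβ hε2 h3 h4 (le_of_eq (div_mul_cancel₀ _ (ne_of_gt hβ)))
  have hp1 := (hη α _ hα hε1).1
  have hp2 := (hη β _ hβ hε2).1
  have t := dist_triangle x (W p1 p2 (1/2)) m
  rw [dist_comm x (W p1 p2 (1/2))] at t
  nlinarith [mul_pos hp1 hα, mul_pos hp2 hβ]

lemma myB (W : X → X → ℝ → X)
    (W1 : ∀ x y z : X, ∀ l : ℝ, l ∈ Set.Icc (0:ℝ) 1 →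
      dist z (W x y l) ≤ (1 - l) * dist z x + l * dist z y)
    (W2 : ∀ x y : X, ∀ l l' : ℝ, l ∈ Set.Icc (0:ℝ) 1 → l' ∈ Set.Icc (0:ℝ) 1 →
      dist (W x y l) (W x y l') = |l - l'| * dist x y)
    (η : ℝ → ℝ → ℝ)
    (hη : ∀ r ε : ℝ, 0 < r → ε ∈ Set.Ioc (0:ℝ) 2 → η r ε ∈ Set.Ioc (0:ℝ) 1)
    (hmod : ∀ r ε : ℝ, ∀ a u v : X, 0 < r → ε ∈ Set.Ioc (0:ℝ) 2 →
      dist u a ≤ r → dist v a ≤ r → ε * r ≤ dist u v →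
      dist (W u v (1/2)) a ≤ (1 - η r ε) * r)
    (x y : X) (l : ℝ) (h0 : 0 ≤ l) (hl : l ≤ 1/2) :
    W x y l = W x (W x y (1/2)) (2*l) := by
  have hmem : l ∈ Set.Icc (0:ℝ) 1 := ⟨h0, by linarith⟩
  have hmemh : (1/2:ℝ) ∈ Set.Icc (0:ℝ) 1 := by norm_num
  have hmem2 : 2*l ∈ Set.Icc (0:ℝ) 1 := ⟨by linarith, by linarith⟩
  have hxm : dist x (W x y (1/2)) = (1/2) * dist x y := by
    rw [dist_comm]; exact myDist0 W W1 W2 x y (1/2) hmemh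
  refine myUnique W η hη hmod (α := l * dist x y) (β := (1/2 - l) * dist x y)
    (x := x) (m := W x y (1/2)) ?_ ?_ ?_ ?_ ?_
  · exact le_of_eq (myDist0 W W1 W2 x y l hmem)
  · refine le_of_eq ?_
    calc dist (W x (W x y (1/2)) (2*l)) x = (2*l) * dist x (W x y (1/2)) :=
          myDist0 W W1 W2 x (W x y (1/2)) (2*l) hmem2
      _ = l * dist x y := by rw [hxm]; ring
  · refine le_of_eq ?_
    rw [W2 x y l (1/2) hmem hmemh, abs_of_nonpos (by linarith : l - 1/2 ≤ 0)]
    ring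
  · refine le_of_eq ?_
    calc dist (W x (W x y (1/2)) (2*l)) (W x y (1/2))
        = (1 - 2*l) * dist x (W x y (1/2)) := myDist1 W W1 W2 x (W x y (1/2)) (2*l) hmem2
      _ = (1/2 - l) * dist x y := by rw [hxm]; ring
  · rw [hxm]; ring_nf; exact le_refl _

lemma myInterp (W : X → X → ℝ → X)
    (W1 : ∀ x y z : X, ∀ l : ℝ, l ∈ Set.Icc (0:ℝ) 1 →
      dist z (W x y l) ≤ (1 - l) * dist z x + l * dist z y)
    (W2 : ∀ x y : X, ∀ l l' : ℝ, l ∈ Set.Icc (0:ℝ) 1 → l' ∈ Set.Icc (0:ℝ) 1 →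
      dist (W x y l) (W x y l') = |l - l'| * dist x y)
    (W3 : ∀ x y : X, ∀ l : ℝ, l ∈ Set.Icc (0:ℝ) 1 → W x y l = W y x (1 - l))
    (η : ℝ → ℝ → ℝ)
    (hη : ∀ r ε : ℝ, 0 < r → ε ∈ Set.Ioc (0:ℝ) 2 → η r ε ∈ Set.Ioc (0:ℝ) 1)
    (hmod : ∀ r ε : ℝ, ∀ a u v : X, 0 < r → ε ∈ Set.Ioc (0:ℝ) 2 →
      dist u a ≤ r → dist v a ≤ r → ε * r ≤ dist u v →
      dist (W u v (1/2)) a ≤ (1 - η r ε) * r)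
    (u v p : X) (l D c : ℝ) (hl : l ∈ Set.Icc (0:ℝ) 1) (hc : 0 ≤ c)
    (hm : dist (W u v (1/2)) p ≤ D - c)
    (hu : dist u p ≤ D) (hv : dist v p ≤ D) :
    dist (W u v l) p ≤ D - 2*(l*(1-l))*c := by
  rcases le_or_gt l (1/2) with h | h
  · rw [myB W W1 W2 η hη hmod u v l hl.1 h]
    have h1 := W1 u (W u v (1/2)) p (2*l) ⟨by linarith [hl.1], by linarith⟩
    rw [dist_comm p u, dist_comm p (W u v (1/2))] at h1
    rw [dist_comm]
    nlinarith [mul_le_mul_of_nonneg_left hu (by linarith [hl.1] : (0:ℝ) ≤ 1 - 2*l),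
      mul_le_mul_of_nonneg_left hm (by linarith [hl.1] : (0:ℝ) ≤ 2*l),
      mul_nonneg (mul_nonneg hl.1 hl.1) hc]
  · rw [W3 u v l hl, myB W W1 W2 η hη hmod v u (1-l) (by linarith [hl.2]) (by linarith)]
    have hmid : W u v (1/2) = W v u (1/2) := by
      have hw := W3 u v (1/2) (by norm_num)
      rw [show (1:ℝ) - 1/2 = 1/2 by norm_num] at hw
      exact hw
    have hm' : dist (W v u (1/2)) p ≤ D - c := by rw [← hmid]; exact hm
    have h1 := W1 v (W v u (1/2)) p (2*(1-l)) ⟨by linarith [hl.2], by linarith⟩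
    rw [dist_comm p v, dist_comm p (W v u (1/2))] at h1
    rw [dist_comm]
    nlinarith [mul_le_mul_of_nonneg_left hv (by linarith : (0:ℝ) ≤ 1 - 2*(1-l)),
      mul_le_mul_of_nonneg_left hm' (by linarith [hl.2] : (0:ℝ) ≤ 2*(1-l)),
      mul_nonneg (mul_nonneg (by linarith [hl.2] : (0:ℝ) ≤ 1-l)
        (by linarith [hl.2] : (0:ℝ) ≤ 1-l)) hc]

lemma myShrink (W : X → X → ℝ → X)
    (W1 : ∀ x y z : X, ∀ l : ℝ, l ∈ Set.Icc (0:ℝ) 1 →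
      dist z (W x y l) ≤ (1 - l) * dist z x + l * dist z y)
    (W2 : ∀ x y : X, ∀ l l' : ℝ, l ∈ Set.Icc (0:ℝ) 1 → l' ∈ Set.Icc (0:ℝ) 1 →
      dist (W x y l) (W x y l') = |l - l'| * dist x y)
    (z p : X) (L : ℝ) (hL : 0 < L) :
    ∃ u : X, dist u p ≤ L ∧ dist z u ≤ max (dist z p - L) 0 := by
  rcases le_or_gt (dist z p) L with h | h
  · exact ⟨z, h, by simpa using le_max_right (dist z p - L) (0:ℝ)⟩
  · have hd : 0 < dist z p := hL.trans h
    have hmem : (1 - L / dist z p) ∈ Set.Icc (0:ℝ) 1 := by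
      constructor
      · have := (div_le_one hd).mpr h.le
        linarith
      · have : 0 < L / dist z p := div_pos hL hd
        linarith
    refine ⟨W z p (1 - L / dist z p), ?_, ?_⟩
    · rw [myDist1 W W1 W2 z p _ hmem]
      have he : (1 - (1 - L / dist z p)) * dist z p = L := by field_simp; ring
      rw [he]
    · rw [dist_comm z _, myDist0 W W1 W2 z p _ hmem]
      have he : (1 - L / dist z p) * dist z p = dist z p - L := by field_simp
      rw [he]
      exact le_max_left _ _

end auxsec

theorem stmt_14
    {X : Type*} [MetricSpace X]
    (W : X → X → ℝ → X)
    (W1 : ∀ x y z : X, ∀ l : ℝ, l ∈ Set.Icc (0:ℝ) 1 →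
      dist z (W x y l) ≤ (1 - l) * dist z x + l * dist z y)
    (W2 : ∀ x y : X, ∀ l l' : ℝ, l ∈ Set.Icc (0:ℝ) 1 → l' ∈ Set.Icc (0:ℝ) 1 →
      dist (W x y l) (W x y l') = |l - l'| * dist x y)
    (W3 : ∀ x y : X, ∀ l : ℝ, l ∈ Set.Icc (0:ℝ) 1 → W x y l = W y x (1 - l))
    (W4 : ∀ x y z w : X, ∀ l : ℝ, l ∈ Set.Icc (0:ℝ) 1 →
      dist (W x z l) (W y w l) ≤ (1 - l) * dist x y + l * dist z w)
    (η : ℝ → ℝ → ℝ)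
    (hη : ∀ r ε : ℝ, 0 < r → ε ∈ Set.Ioc (0:ℝ) 2 → η r ε ∈ Set.Ioc (0:ℝ) 1)
    (hmod : ∀ r ε : ℝ, ∀ a u v : X, 0 < r → ε ∈ Set.Ioc (0:ℝ) 2 →
      dist u a ≤ r → dist v a ≤ r → ε * r ≤ dist u v →
      dist (W u v (1/2)) a ≤ (1 - η r ε) * r)
    (C : Set X) (hCne : C.Nonempty)
    (hconv : ∀ u ∈ C, ∀ v ∈ C, ∀ l : ℝ, l ∈ Set.Icc (0:ℝ) 1 → W u v l ∈ C)
    (T : X → X) (hT : ∀ u ∈ C, T u ∈ C)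
    (hTne : ∀ u ∈ C, ∀ v ∈ C, dist (T u) (T v) ≤ dist u v)
    (lam : ℕ → ℝ) (hlam : ∀ n, lam n ∈ Set.Icc (0:ℝ) 1)
    (x : X) (hx : x ∈ C)
    (xseq : ℕ → X) (hx0 : xseq 0 = x)
    (hxs : ∀ n, xseq (n + 1) = W (xseq n) (T (xseq n)) (lam n))
    (hdiv : Filter.Tendsto (fun N => ∑ k ∈ Finset.range N, lam k * (1 - lam k))
      Filter.atTop Filter.atTop)
    (hfix : ∃ p ∈ C, T p = p)
    : Filter.Tendsto (fun n => dist (xseq n) (T (xseq n))) Filter.atTop (nhds 0) := by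
  obtain ⟨p, hpC, hTp⟩ := hfix
  have hxC : ∀ n, xseq n ∈ C := by
    intro n
    induction n with
    | zero => rw [hx0]; exact hx
    | succ n ih => rw [hxs]; exact hconv _ ih _ (hT _ ih) _ (hlam n)
  set A : ℕ → ℝ := fun n => dist (xseq n) (T (xseq n)) with hA
  set d : ℕ → ℝ := fun n => dist (xseq n) p with hd
  have hTdist : ∀ n, dist (T (xseq n)) p ≤ d n := by
    intro n
    have h := hTne (xseq n) (hxC n) p hpC
    rwa [hTp] at h
  have hd_anti : ∀ n, d (n+1) ≤ d n := by
    intro n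
    have h1 := W1 (xseq n) (T (xseq n)) p (lam n) (hlam n)
    have h2 := hTdist n
    rw [dist_comm p (xseq n), dist_comm p (T (xseq n))] at h1
    simp only [hd]
    rw [hxs n, dist_comm]
    nlinarith [(hlam n).1, (hlam n).2]
  have hdmon : Antitone d := antitone_nat_of_succ_le hd_anti
  have hdist_xn : ∀ n, dist (xseq (n+1)) (xseq n) = lam n * A n := by
    intro n
    rw [hxs n]
    exact myDist0 W W1 W2 _ _ _ (hlam n)
  have hdist_Txn : ∀ n, dist (xseq (n+1)) (T (xseq n)) = (1 - lam n) * A n := by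
    intro n
    rw [hxs n]
    exact myDist1 W W1 W2 _ _ _ (hlam n)
  have hA_anti : ∀ n, A (n+1) ≤ A n := by
    intro n
    have t1 : A (n+1) ≤ dist (xseq (n+1)) (T (xseq n)) + dist (T (xseq n)) (T (xseq (n+1))) :=
      dist_triangle _ _ _
    have t2 : dist (T (xseq n)) (T (xseq (n+1))) ≤ dist (xseq n) (xseq (n+1)) :=
      hTne _ (hxC n) _ (hxC (n+1))
    rw [dist_comm (xseq n) (xseq (n+1))] at t2
    rw [hdist_xn n] at t2
    rw [hdist_Txn n] at t1
    linarith
  have hAmon : Antitone A := antitone_nat_of_succ_le hA_anti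
  have hAbdd : BddBelow (Set.range A) := ⟨0, by rintro _ ⟨n, rfl⟩; exact dist_nonneg⟩
  have ha0 : (0:ℝ) ≤ ⨅ n, A n := le_ciInf fun n => dist_nonneg
  have ha : (⨅ n, A n) = 0 := by
    by_contra hane
    have haa : 0 < ⨅ n, A n := lt_of_le_of_ne ha0 (Ne.symm hane)
    set a := ⨅ n, A n with hadef
    have haA : ∀ n, a ≤ A n := fun n => ciInf_le hAbdd n
    have hA2d : ∀ n, A n ≤ 2 * d n := by
      intro n
      have t := dist_triangle (xseq n) p (T (xseq n))
      have h2 := hTdist n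
      rw [dist_comm p (T (xseq n))] at t
      simp only [hA, hd] at *
      linarith
    have hdbdd : BddBelow (Set.range d) := ⟨0, by rintro _ ⟨n, rfl⟩; exact dist_nonneg⟩
    set L := ⨅ n, d n with hLdef
    have hLd : ∀ n, L ≤ d n := fun n => ciInf_le hdbdd n
    have haL : a / 2 ≤ L := le_ciInf fun n => by linarith [haA n, hA2d n]
    have hL : 0 < L := lt_of_lt_of_le (by linarith) haL
    set ε := a / (2 * L) with hεdef
    have hεmem : ε ∈ Set.Ioc (0:ℝ) 2 := by
      constructor
      · exact div_pos haa (by linarith)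
      · rw [hεdef, div_le_iff₀ (by linarith : (0:ℝ) < 2 * L)]; linarith
    set η0 := η L ε with hη0def
    have hη0 := hη L ε hL hεmem
    have hεL : ε * L = a / 2 := by
      rw [hεdef]; field_simp
    obtain ⟨N, hN⟩ : ∃ N, d N < L + a / 8 :=
      exists_lt_of_ciInf_lt (by linarith : (⨅ n, d n) < L + a / 8)
    set c2 := 2 * (η0 * L) with hc2def
    have hc2 : 0 < c2 := by
      have h1 := hη0.1
      rw [hc2def]; positivity
    have key : ∀ n, N ≤ n → d (n+1) ≤ d n - (lam n * (1 - lam n)) * c2 := by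
      intro n hn
      have hdn8 : d n ≤ L + a / 8 := le_trans (hdmon hn) (le_of_lt hN)
      have hdnL : L ≤ d n := hLd n
      obtain ⟨u, huL, hxu⟩ := myShrink W W1 W2 (xseq n) p L hL
      obtain ⟨v, hvL, hyv⟩ := myShrink W W1 W2 (T (xseq n)) p L hL
      have hxu' : dist (xseq n) u ≤ d n - L :=
        hxu.trans (max_le (by simp only [hd]; linarith) (by linarith))
      have hyv' : dist (T (xseq n)) v ≤ d n - L :=
        hyv.trans (max_le (by linarith [hTdist n]) (by linarith))
      have hgap : ε * L ≤ dist u v := by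
        have t := dist_triangle4 (xseq n) u v (T (xseq n))
        rw [dist_comm v (T (xseq n))] at t
        have haAn := haA n
        simp only [hA] at haAn
        rw [hεL]
        linarith
      have hmid := hmod L ε p u v hL hεmem huL hvL hgap
      have hW4 := W4 (xseq n) u (T (xseq n)) v (1/2) (by norm_num)
      have hmt := dist_triangle (W (xseq n) (T (xseq n)) (1/2)) (W u v (1/2)) p
      have hm : dist (W (xseq n) (T (xseq n)) (1/2)) p ≤ d n - η0 * L := by
        nlinarith [hη0.1, hη0.2, hL]
      have hc : (0:ℝ) ≤ η0 * L := le_of_lt (mul_pos hη0.1 hL)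
      have hint := myInterp W W1 W2 W3 η hη hmod (xseq n) (T (xseq n)) p (lam n) (d n)
        (η0 * L) (hlam n) hc hm (le_refl _) (hTdist n)
      have hgoal : dist (xseq (n+1)) p ≤ d n - (lam n * (1 - lam n)) * c2 := by
        rw [hxs n]
        calc dist (W (xseq n) (T (xseq n)) (lam n)) p
            ≤ d n - 2*(lam n*(1-lam n))*(η0 * L) := hint
          _ = d n - (lam n * (1 - lam n)) * c2 := by rw [hc2def]; ring
      exact hgoal
    have cum : ∀ M, d (N+M) + (∑ k ∈ Finset.Ico N (N+M), lam k * (1 - lam k)) * c2 ≤ d N := by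
      intro M
      induction M with
      | zero => simp
      | succ M ih =>
        have hk := key (N+M) (Nat.le_add_right _ _)
        have hsum : ∑ k ∈ Finset.Ico N (N+(M+1)), lam k * (1-lam k)
            = (∑ k ∈ Finset.Ico N (N+M), lam k * (1-lam k)) + lam (N+M) * (1-lam (N+M)) := by
          rw [show N+(M+1) = (N+M)+1 from rfl]
          exact Finset.sum_Ico_succ_top (Nat.le_add_right _ _) _
        rw [hsum, add_mul, show N+(M+1) = (N+M)+1 from rfl]
        linarith
    obtain ⟨M, hM1, hM2⟩ := ((hdiv.eventually_ge_atTop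
      ((∑ k ∈ Finset.range N, lam k * (1 - lam k)) + d N / c2 + 1)).and
      (eventually_ge_atTop N)).exists
    have e1 : (∑ k ∈ Finset.range M, lam k * (1 - lam k))
        = (∑ k ∈ Finset.range N, lam k * (1 - lam k))
          + ∑ k ∈ Finset.Ico N M, lam k * (1 - lam k) := by
      rw [Finset.range_eq_Ico, Finset.range_eq_Ico]
      exact (Finset.sum_Ico_consecutive _ (Nat.zero_le N) hM2).symm
    have hub := cum (M - N)
    rw [Nat.add_sub_cancel' hM2] at hub
    have hdMnn : (0:ℝ) ≤ d M := dist_nonneg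
    have hS : d N / c2 + 1 ≤ ∑ k ∈ Finset.Ico N M, lam k * (1 - lam k) := by
      rw [e1] at hM1
      linarith
    have h5 : c2 * (d N / c2 + 1) ≤ c2 * (∑ k ∈ Finset.Ico N M, lam k * (1 - lam k)) :=
      mul_le_mul_of_nonneg_left hS hc2.le
    have h4 : c2 * (d N / c2 + 1) = d N + c2 := by field_simp
    nlinarith
  have htend := tendsto_atTop_ciInf hAmon hAbdd
  rw [ha] at htend
  exact htend
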